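/- There exists an absolute constant C > 0 such that for all x ≥ 0 and all real ε with |ε| ≤ 1: (1 − Φ(x)) exp( −C (1 + x) |ε| ) ≤ 1 − Φ(x + ε) ≤ (1 − Φ(x)) exp( C (1 + x) |ε| ); equivalently, | ln( (1 − Φ(x + ε)) / (1 − Φ(x)) ) | ≤ C (1 + x) |ε|. -/

import Mathlib

noncomputable section

/-- The standard normal distribution function `Φ`. -/
def stdGaussCDF (x : ℝ) : ℝ :=
  ∫ t in Set.Iic x, (Real.sqrt (2 * Real.pi))⁻¹ * Real.exp (-(t ^ 2) / 2)

namespace GaussShiftAux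

open MeasureTheory Real Set

def phi (t : ℝ) : ℝ := (Real.sqrt (2 * Real.pi))⁻¹ * Real.exp (-(t ^ 2) / 2)

lemma phi_pos (t : ℝ) : 0 < phi t := by
  unfold phi
  have : (0:ℝ) < Real.sqrt (2 * Real.pi) := Real.sqrt_pos.2 (by positivity)
  positivity

lemma phi_eq (t : ℝ) : phi t = (Real.sqrt (2 * Real.pi))⁻¹ * Real.exp (-(1/2) * t ^ 2) := by
  unfold phi; ring_nf

lemma phi_cont : Continuous phi := by
  unfold phi; fun_prop

lemma phi_integrable : Integrable phi := by
  have h : Integrable (fun t : ℝ => (Real.sqrt (2*Real.pi))⁻¹ * Real.exp (-(1/2) * t^2)) :=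
    (integrable_exp_neg_mul_sq (by norm_num : (0:ℝ) < 1/2)).const_mul _
  exact h.congr (Filter.Eventually.of_forall fun t => (phi_eq t).symm)

lemma phi_integral : ∫ t, phi t = 1 := by
  simp only [phi_eq]
  rw [MeasureTheory.integral_const_mul, integral_gaussian]
  have h2 : Real.pi / (1/2) = 2 * Real.pi := by ring
  rw [h2, inv_mul_cancel₀ (Real.sqrt_pos.2 (by positivity)).ne']

def T (x : ℝ) : ℝ := ∫ t in Set.Ioi x, phi t

lemma T_pos (x : ℝ) : 0 < T x := by
  rw [T, setIntegral_pos_iff_support_of_nonneg_ae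
    (Filter.Eventually.of_forall fun t => (phi_pos t).le) phi_integrable.integrableOn]
  have : Function.support phi ∩ Set.Ioi x = Set.Ioi x := by
    ext t; simp [Function.support, (phi_pos t).ne']
  rw [this, Real.volume_Ioi]
  simp

lemma T_eq (x : ℝ) : 1 - stdGaussCDF x = T x := by
  have h := intervalIntegral.integral_Iic_add_Ioi (b := x) phi_integrable.integrableOn phi_integrable.integrableOn
  rw [phi_integral] at h
  have h2 : stdGaussCDF x = ∫ t in Set.Iic x, phi t := rfl
  rw [h2, T]; linarith

lemma hasDerivAt_cdf (x : ℝ) : HasDerivAt stdGaussCDF (phi x) x := by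
  have key : ∀ y : ℝ, stdGaussCDF y = stdGaussCDF 0 + ∫ t in (0:ℝ)..y, phi t := by
    intro y
    have := intervalIntegral.integral_Iic_sub_Iic (a := (0:ℝ)) (b := y) (μ := volume)
      phi_integrable.integrableOn phi_integrable.integrableOn
    have h2 : stdGaussCDF y = ∫ t in Set.Iic y, phi t := rfl
    have h3 : stdGaussCDF 0 = ∫ t in Set.Iic (0:ℝ), phi t := rfl
    rw [h2, h3]; linarith
  have h1 : HasDerivAt (fun y : ℝ => stdGaussCDF 0 + ∫ t in (0:ℝ)..y, phi t) (phi x) x := by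
    refine HasDerivAt.const_add _ ?_
    exact intervalIntegral.integral_hasDerivAt_right
      phi_integrable.intervalIntegrable
      (phi_cont.stronglyMeasurableAtFilter _ _)
      phi_cont.continuousAt
  exact h1.congr_of_eventuallyEq (Filter.Eventually.of_forall key)

lemma hasDerivAt_T (x : ℝ) : HasDerivAt T (-(phi x)) x := by
  have h : HasDerivAt (fun y => 1 - stdGaussCDF y) (-(phi x)) x :=
    (hasDerivAt_cdf x).const_sub 1
  exact h.congr_of_eventuallyEq (Filter.Eventually.of_forall fun y => (T_eq y).symm)

lemma T_anti : ∀ a b : ℝ, a ≤ b → T b ≤ T a := by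
  intro a b hab
  exact setIntegral_mono_set phi_integrable.integrableOn
    (Filter.Eventually.of_forall fun t => (phi_pos t).le)
    (HasSubset.Subset.eventuallyLE (Set.Ioi_subset_Ioi hab))

lemma phi_anti {a b : ℝ} (ha : 0 ≤ a) (hab : a ≤ b) : phi b ≤ phi a := by
  unfold phi
  have : -(b ^ 2) / 2 ≤ -(a ^ 2) / 2 := by nlinarith
  have h2 : (0:ℝ) < (Real.sqrt (2 * Real.pi))⁻¹ := by
    have : (0:ℝ) < Real.sqrt (2 * Real.pi) := Real.sqrt_pos.2 (by positivity)
    positivity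
  exact mul_le_mul_of_nonneg_left (Real.exp_le_exp.2 this) h2.le

lemma mill (t : ℝ) (ht : 1 ≤ t) : phi t ≤ Real.exp (3/2) * t * T t := by
  have ht0 : (0:ℝ) < t := lt_of_lt_of_le one_pos ht
  have h1 : ∫ s in Set.Ioc t (t + 1/t), phi s ≤ T t := by
    exact setIntegral_mono_set phi_integrable.integrableOn
      (Filter.Eventually.of_forall fun s => (phi_pos s).le)
      (HasSubset.Subset.eventuallyLE Set.Ioc_subset_Ioi_self)
  have h2 : phi (t + 1/t) * (1/t) ≤ ∫ s in Set.Ioc t (t + 1/t), phi s := by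
    have hb : ∀ s ∈ Set.Ioc t (t + 1/t), phi (t + 1/t) ≤ phi s := by
      intro s hs
      exact phi_anti (by linarith [hs.1] : (0:ℝ) ≤ s) hs.2
    have := setIntegral_ge_of_const_le_real (c := phi (t + 1/t)) measurableSet_Ioc
      (by rw [Real.volume_Ioc]; exact ENNReal.ofReal_ne_top) hb
      phi_integrable.integrableOn
    have harg : t + 1/t - t = 1/t := by ring
    rw [Real.volume_real_Ioc, harg, max_eq_left (by positivity : (0:ℝ) ≤ 1/t)] at this
    exact this
  have h3 : phi t * Real.exp (-(3/2)) ≤ phi (t + 1/t) := by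
    unfold phi
    rw [mul_assoc, ← Real.exp_add]
    have h2' : (0:ℝ) < (Real.sqrt (2 * Real.pi))⁻¹ := by
      have : (0:ℝ) < Real.sqrt (2 * Real.pi) := Real.sqrt_pos.2 (by positivity)
      positivity
    refine mul_le_mul_of_nonneg_left (Real.exp_le_exp.2 ?_) h2'.le
    have ht2 : (1:ℝ) ≤ t^2 := by nlinarith
    have : -((t + 1/t) ^ 2) / 2 = -(t^2)/2 + (-(1 + 1/(2*t^2))) := by
      field_simp; ring
    rw [this]
    have : 1/(2*t^2) ≤ 1/2 := by
      rw [div_le_div_iff₀ (by positivity) (by norm_num)]; nlinarith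
    linarith
  -- combine
  have hE : Real.exp (-(3/2)) = (Real.exp (3/2))⁻¹ := by
    rw [← Real.exp_neg]
  have hEpos : (0:ℝ) < Real.exp (3/2) := Real.exp_pos _
  have h4 : phi t * Real.exp (-(3/2)) * (1/t) ≤ T t := by
    calc phi t * Real.exp (-(3/2)) * (1/t) ≤ phi (t + 1/t) * (1/t) :=
          mul_le_mul_of_nonneg_right h3 (by positivity)
    _ ≤ _ := h2.trans h1
  rw [hE] at h4
  calc phi t = Real.exp (3/2) * t * (phi t * (Real.exp (3/2))⁻¹ * (1/t)) := by
        field_simp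
  _ ≤ Real.exp (3/2) * t * T t := by
        exact mul_le_mul_of_nonneg_left h4 (by positivity)

def C0 : ℝ := Real.exp (3/2) + (Real.sqrt (2 * Real.pi))⁻¹ / T 1

lemma C0_pos : 0 < C0 := by
  have h2 : (0:ℝ) < (Real.sqrt (2 * Real.pi))⁻¹ := by
    have : (0:ℝ) < Real.sqrt (2 * Real.pi) := Real.sqrt_pos.2 (by positivity)
    positivity
  have := T_pos 1
  have := Real.exp_pos (3/2 : ℝ)
  unfold C0; positivity

lemma hazard {x t : ℝ} (hx : 0 ≤ x) (ht : x - 1 ≤ t) (ht' : t ≤ x + 1) :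
    phi t ≤ C0 * (1 + x) * T t := by
  have hTt := T_pos t
  have hT1 := T_pos 1
  have hone : (1:ℝ) ≤ 1 + x := by linarith
  have hEpos : (0:ℝ) < Real.exp (3/2) := Real.exp_pos _
  have hc0 : (0:ℝ) < (Real.sqrt (2 * Real.pi))⁻¹ := by
    have : (0:ℝ) < Real.sqrt (2 * Real.pi) := Real.sqrt_pos.2 (by positivity)
    positivity
  rcases le_or_gt t 1 with h | h
  · have h1 : phi t ≤ (Real.sqrt (2 * Real.pi))⁻¹ := by
      unfold phi
      nth_rewrite 2 [← mul_one (Real.sqrt (2 * Real.pi))⁻¹]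
      refine mul_le_mul_of_nonneg_left ?_ hc0.le
      rw [← Real.exp_zero]
      exact Real.exp_le_exp.2 (by nlinarith)
    have h2 : T 1 ≤ T t := T_anti t 1 h
    calc phi t ≤ (Real.sqrt (2 * Real.pi))⁻¹ / T 1 * T 1 := by
          rw [div_mul_cancel₀ _ hT1.ne']; exact h1
    _ ≤ (Real.sqrt (2 * Real.pi))⁻¹ / T 1 * T t :=
          mul_le_mul_of_nonneg_left h2 (by positivity)
    _ ≤ C0 * (1 + x) * T t := by
          refine mul_le_mul_of_nonneg_right ?_ hTt.le
          unfold C0; nlinarith [div_pos hc0 hT1]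
  · have h1 := mill t h.le
    calc phi t ≤ Real.exp (3/2) * t * T t := h1
    _ ≤ C0 * (1 + x) * T t := by
          refine mul_le_mul_of_nonneg_right ?_ hTt.le
          unfold C0
          nlinarith [div_pos hc0 hT1]

end GaussShiftAux

open GaussShiftAux MeasureTheory Real in
theorem gaussian_tail_shift :
    ∃ C : ℝ, 0 < C ∧
      ∀ x ε : ℝ, 0 ≤ x → |ε| ≤ 1 →
        ((1 - stdGaussCDF x) * Real.exp (-C * (1 + x) * |ε|) ≤ 1 - stdGaussCDF (x + ε) ∧
          1 - stdGaussCDF (x + ε) ≤ (1 - stdGaussCDF x) * Real.exp (C * (1 + x) * |ε|)) ∧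
        |Real.log ((1 - stdGaussCDF (x + ε)) / (1 - stdGaussCDF x))| ≤
          C * (1 + x) * |ε| := by
  refine ⟨C0, C0_pos, fun x ε hx hε => ?_⟩
  have hsub : Set.uIcc x (x + ε) ⊆ Set.Icc (x - 1) (x + 1) := by
    have h1 := abs_le.1 hε
    exact Set.uIcc_subset_Icc ⟨by linarith, by linarith⟩ ⟨by linarith [h1.1], by linarith [h1.2]⟩
  set L : ℝ → ℝ := fun y => Real.log (1 - stdGaussCDF y) with hL
  have hderiv : ∀ y ∈ Set.uIcc x (x + ε),
      HasDerivWithinAt L (-(phi y) / (1 - stdGaussCDF y)) (Set.uIcc x (x + ε)) y := by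
    intro y _
    have h1 : HasDerivAt (fun z => 1 - stdGaussCDF z) (-(phi y)) y :=
      (hasDerivAt_cdf y).const_sub 1
    have h2 : (1 - stdGaussCDF y) ≠ 0 := by rw [T_eq]; exact (T_pos y).ne'
    exact (h1.log h2).hasDerivWithinAt
  have hbound : ∀ y ∈ Set.uIcc x (x + ε),
      ‖-(phi y) / (1 - stdGaussCDF y)‖ ≤ C0 * (1 + x) := by
    intro y hy
    have hy' := hsub hy
    have hTy := T_pos y
    have h1 := hazard hx hy'.1 hy'.2
    rw [Real.norm_eq_abs, abs_div, abs_neg, abs_of_pos (phi_pos y), T_eq,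
      abs_of_pos hTy, div_le_iff₀ hTy]
    linarith
  have hmvt := Convex.norm_image_sub_le_of_norm_hasDerivWithin_le hderiv hbound
    (convex_uIcc _ _) (Set.left_mem_uIcc) (Set.right_mem_uIcc)
  rw [Real.norm_eq_abs, Real.norm_eq_abs, add_sub_cancel_left] at hmvt
  -- hmvt : |L (x+ε) - L x| ≤ C0 * (1+x) * |ε|
  have hTa := T_pos x
  have hTb := T_pos (x + ε)
  have ha : (0:ℝ) < 1 - stdGaussCDF x := by rw [T_eq]; exact hTa
  have hb : (0:ℝ) < 1 - stdGaussCDF (x + ε) := by rw [T_eq]; exact hTb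
  have hlog : Real.log ((1 - stdGaussCDF (x + ε)) / (1 - stdGaussCDF x)) =
      L (x + ε) - L x := Real.log_div hb.ne' ha.ne'
  have key : |L (x + ε) - L x| ≤ C0 * (1 + x) * |ε| := hmvt
  refine ⟨⟨?_, ?_⟩, by rw [hlog]; exact key⟩
  · have h1 : -(C0 * (1 + x) * |ε|) ≤ L (x + ε) - L x := neg_le_of_abs_le key
    have h2 : 1 - stdGaussCDF (x + ε) = (1 - stdGaussCDF x) * Real.exp (L (x + ε) - L x) := by
      rw [hL]
      rw [Real.exp_sub, Real.exp_log hb, Real.exp_log ha, mul_div_cancel₀ _ ha.ne']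
    rw [h2, neg_mul, neg_mul]
    exact mul_le_mul_of_nonneg_left (Real.exp_le_exp.2 h1) ha.le
  · have h1 : L (x + ε) - L x ≤ C0 * (1 + x) * |ε| := le_of_abs_le key
    have h2 : 1 - stdGaussCDF (x + ε) = (1 - stdGaussCDF x) * Real.exp (L (x + ε) - L x) := by
      rw [hL]
      rw [Real.exp_sub, Real.exp_log hb, Real.exp_log ha, mul_div_cancel₀ _ ha.ne']
    rw [h2]
    exact mul_le_mul_of_nonneg_left (Real.exp_le_exp.2 h1) ha.le

end
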